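/- For all integers p, q ≥ 0, the set 𝒫(p,q) of weighted (p,q) Delannoy paths is in bijection with the set of signed (p,q)-involutions; in particular |𝒫(p,q)| = α_{p,q}. -/

import Mathlib

/-- A signed `(p,q)`-involution: a pair `(π, ε)` where `π` is an involution of
`{1,…,p+q}` and `ε` assigns a sign (`true` = `+`, `false` = `-`) to each fixed
point of `π` (we normalize `ε` to be `true` on non-fixed points), such that the
number of fixed points with sign `+` minus the number of fixed points with
sign `-` equals `p - q`. -/
def IsSignedInv (p q : ℕ) (x : Equiv.Perm (Fin (p + q)) × (Fin (p + q) → Bool)) : Prop :=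
  x.1 * x.1 = 1 ∧ (∀ i, x.1 i ≠ i → x.2 i = true) ∧
    ((Finset.univ.filter fun i => x.1 i = i ∧ x.2 i = true).card : ℤ) -
      ((Finset.univ.filter fun i => x.1 i = i ∧ x.2 i = false).card : ℤ) = (p : ℤ) - (q : ℤ)

/-- `γ_{k,p,q}`: the number of signed `(p,q)`-involutions whose underlying
involution has exactly `k` two-cycles, i.e. exactly `2k` non-fixed points. -/
noncomputable def gammaCount (k p q : ℕ) : ℕ :=
  Nat.card {x : Equiv.Perm (Fin (p + q)) × (Fin (p + q) → Bool) //
    IsSignedInv p q x ∧ (Finset.univ.filter fun i => x.1 i ≠ i).card = 2 * k}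

/-- `α_{p,q}`: the number of signed `(p,q)`-involutions. -/
noncomputable def alphaCount (p q : ℕ) : ℕ :=
  Nat.card {x : Equiv.Perm (Fin (p + q)) × (Fin (p + q) → Bool) // IsSignedInv p q x}
/-- A step of a lattice path: east `(1,0)`, north `(0,1)`, or diagonal `(1,1)`. -/
inductive DStep : Type
  | E | N | D
deriving DecidableEq

/-- The displacement vector of a step. -/
def stepVec : DStep → ℕ × ℕ
  | .E => (1, 0)
  | .N => (0, 1)
  | .D => (1, 1)

/-- A `(p,q)` Delannoy path: a sequence of steps `E`, `N`, `D` whose total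
displacement from `(0,0)` is `(p,q)`. -/
def IsDelannoy (p q : ℕ) (l : List DStep) : Prop :=
  (l.map stepVec).sum = (p, q)

/-- `D(p,q)`, the number of `(p,q)` Delannoy paths. -/
noncomputable def delannoyNum (p q : ℕ) : ℕ :=
  Nat.card {l : List DStep // IsDelannoy p q l}

/-- The weight of the part of a Delannoy path starting at the given lattice
point: a diagonal step starting at `(a,b)` contributes a factor `a+b+1`,
other steps contribute `1`. -/
def weightFrom : ℕ × ℕ → List DStep → ℕ
  | _, [] => 1
  | ab, s :: t => (if s = DStep.D then ab.1 + ab.2 + 1 else 1) * weightFrom (ab + stepVec s) t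

/-- The weight `ω(L)` of a Delannoy path `L` (starting at the origin): the
product over all diagonal steps going from a point `(a,b)` to `(a+1,b+1)`
of the numbers `a+b+1`. -/
def weight (l : List DStep) : ℕ := weightFrom (0, 0) l

/-- Validity of labels along a weighted Delannoy path starting at the given
lattice point: a diagonal step starting at `(a,b)` may carry any label `m`
with `1 ≤ m ≤ a+b+1`; non-diagonal steps carry no label (normalized to `0`). -/
def IsWeightedFrom : ℕ × ℕ → List (DStep × ℕ) → Prop
  | _, [] => True
  | ab, s :: t =>
      (if s.1 = DStep.D then 1 ≤ s.2 ∧ s.2 ≤ ab.1 + ab.2 + 1 else s.2 = 0) ∧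
        IsWeightedFrom (ab + stepVec s.1) t

/-- A weighted `(p,q)` Delannoy path: a `(p,q)` Delannoy path together with an
integer label on each diagonal step, a diagonal step from `(a,b)` to
`(a+1,b+1)` carrying a label `m` with `1 ≤ m ≤ a+b+1`. -/
def IsWeightedDelannoy (p q : ℕ) (l : List (DStep × ℕ)) : Prop :=
  ((l.map fun s => stepVec s.1).sum = (p, q)) ∧ IsWeightedFrom (0, 0) l

-- auxiliary
instance : Fintype DStep := ⟨{.E, .N, .D}, by intro x; cases x <;> simp⟩

def psum (l : List (DStep × ℕ)) : ℕ × ℕ := (l.map fun s => stepVec s.1).sum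

lemma psum_nil : psum [] = (0,0) := rfl

lemma psum_append (l₁ l₂ : List (DStep × ℕ)) : psum (l₁ ++ l₂) = psum l₁ + psum l₂ := by
  simp [psum]

lemma psum_cons (s : DStep × ℕ) (t : List (DStep × ℕ)) : psum (s :: t) = stepVec s.1 + psum t := by
  simp [psum]

lemma iwf_append (l₁ l₂ : List (DStep × ℕ)) (ab : ℕ × ℕ) :
    IsWeightedFrom ab (l₁ ++ l₂) ↔ IsWeightedFrom ab l₁ ∧ IsWeightedFrom (ab + psum l₁) l₂ := by
  induction l₁ generalizing ab with
  | nil => simp [IsWeightedFrom, psum]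
  | cons s t ih =>
      simp only [List.cons_append, IsWeightedFrom, List.append_eq] at *
      rw [ih, psum_cons, ← add_assoc]
      tauto

lemma length_le_of_psum (l : List (DStep × ℕ)) : l.length ≤ (psum l).1 + (psum l).2 := by
  induction l with
  | nil => simp [psum]
  | cons s t ih =>
      rw [psum_cons]
      have : 1 ≤ (stepVec s.1).1 + (stepVec s.1).2 := by cases s.1 <;> simp [stepVec]
      simp only [Prod.fst_add, Prod.snd_add, List.length_cons]
      omega

lemma label_bound (l : List (DStep × ℕ)) (ab : ℕ × ℕ) (h : IsWeightedFrom ab l) :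
    ∀ s ∈ l, s.2 ≤ ab.1 + ab.2 + 2 * l.length := by
  induction l generalizing ab with
  | nil => simp
  | cons s t ih =>
      obtain ⟨h1, h2⟩ := h
      intro x hx
      rcases List.mem_cons.mp hx with rfl | hx
      · by_cases hd : x.1 = DStep.D
        · rw [if_pos hd] at h1; simp only [List.length_cons]; omega
        · rw [if_neg hd] at h1; omega
      · have := ih (ab + stepVec s.1) h2 x hx
        have h3 : (stepVec s.1).1 + (stepVec s.1).2 ≤ 2 := by cases s.1 <;> simp [stepVec]
        simp only [Prod.fst_add, Prod.snd_add, List.length_cons] at *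
        omega

lemma wd_length_le {p q : ℕ} {l : List (DStep × ℕ)} (h : IsWeightedDelannoy p q l) :
    l.length ≤ p + q := by
  have := length_le_of_psum l
  have hs : psum l = (p, q) := h.1
  rw [hs] at this; exact this

lemma wd_label_le {p q : ℕ} {l : List (DStep × ℕ)} (h : IsWeightedDelannoy p q l) :
    ∀ s ∈ l, s.2 < 2 * (p + q) + 1 := by
  intro s hs
  have := label_bound l (0,0) h.2 s hs
  have := wd_length_le h
  omega

instance wdFinite (p q : ℕ) : Finite {l : List (DStep × ℕ) // IsWeightedDelannoy p q l} := by
  let M := 2 * (p + q) + 1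
  let F : {l : List (DStep × ℕ) // IsWeightedDelannoy p q l} →
      (Fin (p + q) → Option (DStep × Fin M)) :=
    fun ⟨l, _⟩ i => (l[(i:ℕ)]?).map fun s => (s.1, ⟨s.2 % M, Nat.mod_lt _ (by omega)⟩)
  have hF : Function.Injective F := by
    rintro ⟨l₁, h₁⟩ ⟨l₂, h₂⟩ h
    ext1
    apply List.ext_getElem?
    intro i
    by_cases hi : i < p + q
    · have := congrFun h ⟨i, hi⟩
      simp only [F] at this
      rcases hg1 : l₁[i]? with _ | s₁ <;> rcases hg2 : l₂[i]? with _ | s₂ <;>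
        rw [hg1, hg2] at this <;> simp_all
      obtain ⟨he, hl⟩ := this
      have b1 : s₁.2 < M := wd_label_le h₁ s₁ (List.mem_of_getElem? hg1)
      have b2 : s₂.2 < M := wd_label_le h₂ s₂ (List.mem_of_getElem? hg2)
      rw [Nat.mod_eq_of_lt b1, Nat.mod_eq_of_lt b2] at hl
      exact Prod.ext he hl
    · rw [List.getElem?_eq_none, List.getElem?_eq_none]
      · exact le_trans (wd_length_le h₂) (by omega)
      · exact le_trans (wd_length_le h₁) (by omega)
  exact Finite.of_injective F hF

-- boundary characterizations
lemma all_E (l : List (DStep × ℕ)) (ab : ℕ × ℕ) (h0 : (psum l).2 = 0)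
    (h : IsWeightedFrom ab l) : l = List.replicate (psum l).1 (DStep.E, 0) := by
  induction l generalizing ab with
  | nil => simp [psum]
  | cons s t ih =>
      rw [psum_cons] at h0 ⊢
      simp only [Prod.snd_add, Prod.fst_add] at h0 ⊢
      obtain ⟨h1, h2⟩ := h
      have hE : s.1 = DStep.E := by
        cases hs : s.1
        · rfl
        · rw [hs] at h0; simp [stepVec] at h0
        · rw [hs] at h0; simp [stepVec] at h0
      rw [if_neg (by rw [hE]; simp)] at h1
      have ht := ih (ab + stepVec s.1) (by omega) h2
      have hv : (stepVec s.1).1 = 1 := by rw [hE]; rfl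
      have hs' : s = (DStep.E, 0) := by
        obtain ⟨a, b⟩ := s
        simp only at hE h1
        rw [hE, h1]
      rw [hv, show 1 + (psum t).1 = (psum t).1 + 1 from by omega, List.replicate_succ]
      rw [hs']
      exact congrArg _ ht

lemma all_N (l : List (DStep × ℕ)) (ab : ℕ × ℕ) (h0 : (psum l).1 = 0)
    (h : IsWeightedFrom ab l) : l = List.replicate (psum l).2 (DStep.N, 0) := by
  induction l generalizing ab with
  | nil => simp [psum]
  | cons s t ih =>
      rw [psum_cons] at h0 ⊢
      simp only [Prod.snd_add, Prod.fst_add] at h0 ⊢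
      obtain ⟨h1, h2⟩ := h
      have hE : s.1 = DStep.N := by
        cases hs : s.1
        · rw [hs] at h0; simp [stepVec] at h0
        · rfl
        · rw [hs] at h0; simp [stepVec] at h0
      rw [if_neg (by rw [hE]; simp)] at h1
      have ht := ih (ab + stepVec s.1) (by omega) h2
      have hv : (stepVec s.1).2 = 1 := by rw [hE]; rfl
      have hs' : s = (DStep.N, 0) := by
        obtain ⟨a, b⟩ := s
        simp only at hE h1
        rw [hE, h1]
      rw [hv, show 1 + (psum t).2 = (psum t).2 + 1 from by omega, List.replicate_succ]
      rw [hs']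
      exact congrArg _ ht

lemma wd_p0_iff (p : ℕ) (l : List (DStep × ℕ)) :
    IsWeightedDelannoy p 0 l ↔ l = List.replicate p (DStep.E, 0) := by
  constructor
  · intro h
    have hs : psum l = (p, 0) := h.1
    have := all_E l (0,0) (by rw [hs]) h.2
    rwa [hs] at this
  · rintro rfl
    constructor
    · show psum _ = _
      induction p with
      | zero => rfl
      | succ n ih => rw [List.replicate_succ, psum_cons, ih]; simp [stepVec, Prod.ext_iff]; omega
    · suffices h : ∀ (n : ℕ) (ab : ℕ × ℕ), IsWeightedFrom ab (List.replicate n (DStep.E, 0)) from h p (0,0)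
      intro n
      induction n with
      | zero => intro ab; trivial
      | succ k ih => intro ab; exact ⟨by simp, ih _⟩

lemma wd_0q_iff (q : ℕ) (l : List (DStep × ℕ)) :
    IsWeightedDelannoy 0 q l ↔ l = List.replicate q (DStep.N, 0) := by
  constructor
  · intro h
    have hs : psum l = (0, q) := h.1
    have := all_N l (0,0) (by rw [hs]) h.2
    rwa [hs] at this
  · rintro rfl
    constructor
    · show psum _ = _
      induction q with
      | zero => rfl
      | succ n ih => rw [List.replicate_succ, psum_cons, ih]; simp [stepVec, Prod.ext_iff]; omega
    · suffices h : ∀ (n : ℕ) (ab : ℕ × ℕ), IsWeightedFrom ab (List.replicate n (DStep.N, 0)) from h q (0,0)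
      intro n
      induction n with
      | zero => intro ab; trivial
      | succ k ih => intro ab; exact ⟨by simp, ih _⟩

lemma card_wd_p0 (p : ℕ) : Nat.card {l : List (DStep × ℕ) // IsWeightedDelannoy p 0 l} = 1 := by
  haveI : Nonempty {l : List (DStep × ℕ) // IsWeightedDelannoy p 0 l} :=
    ⟨⟨_, (wd_p0_iff p _).2 rfl⟩⟩
  haveI : Subsingleton {l : List (DStep × ℕ) // IsWeightedDelannoy p 0 l} := by
    constructor
    rintro ⟨l₁, h₁⟩ ⟨l₂, h₂⟩
    have e1 := (wd_p0_iff p _).1 h₁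
    have e2 := (wd_p0_iff p _).1 h₂
    subst e1; subst e2; rfl
  exact Nat.card_unique

lemma card_wd_0q (q : ℕ) : Nat.card {l : List (DStep × ℕ) // IsWeightedDelannoy 0 q l} = 1 := by
  haveI : Nonempty {l : List (DStep × ℕ) // IsWeightedDelannoy 0 q l} :=
    ⟨⟨_, (wd_0q_iff q _).2 rfl⟩⟩
  haveI : Subsingleton {l : List (DStep × ℕ) // IsWeightedDelannoy 0 q l} := by
    constructor
    rintro ⟨l₁, h₁⟩ ⟨l₂, h₂⟩
    have e1 := (wd_0q_iff q _).1 h₁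
    have e2 := (wd_0q_iff q _).1 h₂
    subst e1; subst e2; rfl
  exact Nat.card_unique

lemma wd_snoc {a b p q : ℕ} {l : List (DStep × ℕ)} (h : IsWeightedDelannoy a b l)
    (s : DStep × ℕ) (hsum : ((a:ℕ), (b:ℕ)) + stepVec s.1 = (p, q))
    (hcond : if s.1 = DStep.D then 1 ≤ s.2 ∧ s.2 ≤ a + b + 1 else s.2 = 0) :
    IsWeightedDelannoy p q (l ++ [s]) := by
  have hps : psum l = (a, b) := h.1
  constructor
  · show psum _ = _
    rw [psum_append, hps]
    simpa [psum] using hsum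
  · rw [iwf_append]
    refine ⟨h.2, ?_⟩
    rw [hps]
    exact ⟨by simpa using hcond, trivial⟩

lemma wd_unsnoc {p q : ℕ} {l : List (DStep × ℕ)} {s : DStep × ℕ}
    (h : IsWeightedDelannoy p q (l ++ [s])) :
    IsWeightedDelannoy (psum l).1 (psum l).2 l ∧ psum l + stepVec s.1 = (p, q) ∧
      (if s.1 = DStep.D then 1 ≤ s.2 ∧ s.2 ≤ (psum l).1 + (psum l).2 + 1 else s.2 = 0) := by
  have hsum : psum (l ++ [s]) = (p, q) := h.1
  rw [psum_append] at hsum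
  have hps : psum [s] = stepVec s.1 := by simp [psum]
  rw [hps] at hsum
  have h2 := (iwf_append l [s] (0,0)).1 h.2
  refine ⟨⟨rfl, h2.1⟩, hsum, ?_⟩
  have := h2.2.1
  simpa using this

section PathRec
variable (p q : ℕ)

abbrev WD (p q : ℕ) := {l : List (DStep × ℕ) // IsWeightedDelannoy p q l}

noncomputable def pfun : WD p (q+1) ⊕ WD (p+1) q ⊕ (Fin (p+q+1) × WD p q) → WD (p+1) (q+1)
  | .inl ⟨l, h⟩ => ⟨l ++ [(DStep.E, 0)], wd_snoc h _ (by simp [stepVec, Prod.ext_iff]) (by simp)⟩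
  | .inr (.inl ⟨l, h⟩) => ⟨l ++ [(DStep.N, 0)], wd_snoc h _ (by simp [stepVec, Prod.ext_iff]) (by simp)⟩
  | .inr (.inr (m, ⟨l, h⟩)) => ⟨l ++ [(DStep.D, (m : ℕ) + 1)],
      wd_snoc h _ (by simp [stepVec, Prod.ext_iff]) (by simp; omega)⟩

lemma pfun_inj : Function.Injective (pfun p q) := by
  rintro (⟨l₁, h₁⟩ | ⟨l₁, h₁⟩ | ⟨m₁, l₁, h₁⟩) (⟨l₂, h₂⟩ | ⟨l₂, h₂⟩ | ⟨m₂, l₂, h₂⟩) h <;>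
      simp only [pfun, Subtype.mk.injEq] at h <;>
      have h' := congrArg List.reverse h <;>
      simp only [List.reverse_append, List.reverse_cons, List.reverse_nil, List.nil_append,
        List.singleton_append, List.cons.injEq, Prod.mk.injEq] at h'
  · have := List.reverse_injective h'.2; subst this; rfl
  · exact absurd h'.1.1 (by simp)
  · exact absurd h'.1.1 (by simp)
  · exact absurd h'.1.1 (by simp)
  · have := List.reverse_injective h'.2; subst this; rfl
  · exact absurd h'.1.1 (by simp)
  · exact absurd h'.1.1 (by simp)
  · exact absurd h'.1.1 (by simp)
  · obtain ⟨⟨_, hm⟩, hl⟩ := h'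
    simp only [Sum.inr.injEq, Prod.mk.injEq, Subtype.mk.injEq]
    refine ⟨Fin.ext (by omega), by simpa using congrArg List.reverse hl⟩

lemma pfun_surj : Function.Surjective (pfun p q) := by
  rintro ⟨l, hl⟩
  rcases List.eq_nil_or_concat l with rfl | ⟨t, s, rfl⟩
  · exfalso
    have : psum ([] : List (DStep × ℕ)) = (p+1, q+1) := hl.1
    rw [psum_nil] at this
    exact absurd (congrArg Prod.fst this) (by simp)
  · have hl2 : IsWeightedDelannoy (p+1) (q+1) (t ++ [s]) := by
      rwa [List.concat_eq_append] at hl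
    obtain ⟨ht, hsum, hcond⟩ := wd_unsnoc hl2
    cases hs : s.1 with
    | E =>
        rw [hs] at hsum hcond
        simp only [stepVec, Prod.ext_iff, Prod.fst_add, Prod.snd_add] at hsum
        have e1 : (psum t).1 = p := by omega
        have e2 : (psum t).2 = q + 1 := by omega
        refine ⟨.inl ⟨t, by rwa [e1, e2] at ht⟩, ?_⟩
        simp only [pfun, Subtype.mk.injEq]
        rw [List.concat_eq_append]
        congr 1
        simp at hcond
        have : s = (DStep.E, 0) := by rw [← hs, ← hcond]
        rw [this]
    | N =>
        rw [hs] at hsum hcond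
        simp only [stepVec, Prod.ext_iff, Prod.fst_add, Prod.snd_add] at hsum
        have e1 : (psum t).1 = p + 1 := by omega
        have e2 : (psum t).2 = q := by omega
        refine ⟨.inr (.inl ⟨t, by rwa [e1, e2] at ht⟩), ?_⟩
        simp only [pfun, Subtype.mk.injEq]
        rw [List.concat_eq_append]
        congr 1
        simp at hcond
        have : s = (DStep.N, 0) := by rw [← hs, ← hcond]
        rw [this]
    | D =>
        rw [hs] at hsum hcond
        simp only [stepVec, Prod.ext_iff, Prod.fst_add, Prod.snd_add] at hsum
        have e1 : (psum t).1 = p := by omega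
        have e2 : (psum t).2 = q := by omega
        rw [e1, e2] at hcond
        have hcond : 1 ≤ s.2 ∧ s.2 ≤ p + q + 1 := by simpa using hcond
        refine ⟨.inr (.inr (⟨s.2 - 1, by clear hs; omega⟩, ⟨t, by rwa [e1, e2] at ht⟩)), ?_⟩
        simp only [pfun, Subtype.mk.injEq]
        rw [List.concat_eq_append]
        congr 1
        simp only [List.cons.injEq, and_true]
        have hss : s = (DStep.D, s.2) := by rw [← hs]
        rw [hss]
        simp only [Prod.mk.injEq, true_and]
        show s.2 - 1 + 1 = s.2
        clear hs
        omega

lemma card_wd_rec :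
    Nat.card (WD (p+1) (q+1)) =
      Nat.card (WD p (q+1)) + Nat.card (WD (p+1) q) + (p+q+1) * Nat.card (WD p q) := by
  have := Nat.card_eq_of_bijective _ ⟨pfun_inj p q, pfun_surj p q⟩
  rw [← this, Nat.card_sum, Nat.card_sum, Nat.card_prod, Nat.card_eq_fintype_card (α := Fin (p+q+1)),
    Fintype.card_fin]
  ring

end PathRec

section Inv
open Equiv Finset

def SIP (n : ℕ) (d : ℤ) (x : Equiv.Perm (Fin n) × (Fin n → Bool)) : Prop :=
  x.1 * x.1 = 1 ∧ (∀ i, x.1 i ≠ i → x.2 i = true) ∧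
    ((Finset.univ.filter fun i => x.1 i = i ∧ x.2 i = true).card : ℤ) -
      ((Finset.univ.filter fun i => x.1 i = i ∧ x.2 i = false).card : ℤ) = d

abbrev SI (n : ℕ) (d : ℤ) := {x : Equiv.Perm (Fin n) × (Fin n → Bool) // SIP n d x}

lemma invol_apply {n : ℕ} {π : Equiv.Perm (Fin n)} (h : π * π = 1) (i : Fin n) :
    π (π i) = i := by
  have := DFunLike.congr_fun h i
  simpa [Equiv.Perm.mul_apply] using this

/-- extend a permutation to one more point, fixing the last point -/
def ext1 {n : ℕ} (π : Equiv.Perm (Fin n)) : Equiv.Perm (Fin (n + 1)) where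
  toFun := Fin.lastCases (Fin.last n) (fun i => (π i).castSucc)
  invFun := Fin.lastCases (Fin.last n) (fun i => (π.symm i).castSucc)
  left_inv := by
    intro i
    induction i using Fin.lastCases with
    | last => simp
    | cast i => simp
  right_inv := by
    intro i
    induction i using Fin.lastCases with
    | last => simp
    | cast i => simp

@[simp] lemma ext1_last {n : ℕ} (π : Equiv.Perm (Fin n)) :
    ext1 π (Fin.last n) = Fin.last n := by
  simp only [ext1, Equiv.coe_fn_mk, Fin.lastCases_last]

@[simp] lemma ext1_castSucc {n : ℕ} (π : Equiv.Perm (Fin n)) (i : Fin n) :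
    ext1 π i.castSucc = (π i).castSucc := by
  simp only [ext1, Equiv.coe_fn_mk, Fin.lastCases_castSucc]

lemma ext1_inj {n : ℕ} : Function.Injective (ext1 (n := n)) := by
  intro π₁ π₂ h
  apply Equiv.ext
  intro i
  have := DFunLike.congr_fun h i.castSucc
  simpa [Fin.castSucc_inj] using this

/-- restrict a permutation fixing the last point -/
def restr1 {n : ℕ} (σ : Equiv.Perm (Fin (n + 1))) (h : σ (Fin.last n) = Fin.last n) :
    Equiv.Perm (Fin n) where
  toFun i := (σ i.castSucc).castPred
    (fun he => (Fin.castSucc_lt_last i).ne (σ.injective (he.trans h.symm)))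
  invFun i := (σ.symm i.castSucc).castPred
    (fun he => (Fin.castSucc_lt_last i).ne
      (by rw [← Equiv.apply_symm_apply σ i.castSucc, he, h]))
  left_inv := by intro i; simp [Fin.castSucc_castPred]
  right_inv := by intro i; simp [Fin.castSucc_castPred]

lemma restr1_apply {n : ℕ} (σ : Equiv.Perm (Fin (n + 1))) (h : σ (Fin.last n) = Fin.last n)
    (i : Fin n) : (restr1 σ h i).castSucc = σ i.castSucc := by
  simp [restr1, Fin.castSucc_castPred]

lemma ext1_restr1 {n : ℕ} (σ : Equiv.Perm (Fin (n + 1))) (h : σ (Fin.last n) = Fin.last n) :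
    ext1 (restr1 σ h) = σ := by
  ext i
  induction i using Fin.lastCases with
  | last => rw [ext1_last, h]
  | cast i => rw [ext1_castSucc, restr1_apply]

lemma count_ext1 {n : ℕ} (π : Equiv.Perm (Fin n)) (ε' : Fin (n + 1) → Bool) (t : Bool) :
    (Finset.univ.filter fun i => ext1 π i = i ∧ ε' i = t).card
      = (Finset.univ.filter fun i => π i = i ∧ ε' i.castSucc = t).card
        + (if ε' (Fin.last n) = t then 1 else 0) := by
  rw [Finset.card_filter, Finset.card_filter, Fin.sum_univ_castSucc]
  congr 1
  · refine Finset.sum_congr rfl fun i _ => ?_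
    simp only [ext1_castSucc, Fin.castSucc_inj]
  · simp only [ext1_last, true_and]

lemma count_conj {n : ℕ} (g σ : Equiv.Perm (Fin n)) (ε : Fin n → Bool) (t : Bool) :
    (Finset.univ.filter fun i => (g * σ * g⁻¹) i = i ∧ ε (g⁻¹ i) = t).card
      = (Finset.univ.filter fun i => σ i = i ∧ ε i = t).card := by
  rw [Finset.card_filter, Finset.card_filter, ← Equiv.sum_comp g]
  refine Finset.sum_congr rfl fun i _ => ?_
  simp [Equiv.Perm.mul_apply]

variable {m : ℕ}

def aF (m : ℕ) : Fin (m + 2) := (Fin.last m).castSucc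
def bF (m : ℕ) : Fin (m + 2) := Fin.last (m + 1)

def cs2 (y : Fin m) : Fin (m + 2) := y.castSucc.castSucc

lemma aF_ne_bF : aF m ≠ bF m := (Fin.castSucc_lt_last _).ne
lemma cs2_ne_aF (y : Fin m) : cs2 y ≠ aF m :=
  fun h => (Fin.castSucc_lt_last _).ne (Fin.castSucc_injective _ h)
lemma cs2_ne_bF (y : Fin m) : cs2 y ≠ bF m := (Fin.castSucc_lt_last _).ne
lemma cs2_inj : Function.Injective (cs2 (m := m)) := fun y z h =>
  Fin.castSucc_injective _ (Fin.castSucc_injective _ h)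

def wperm (π : Equiv.Perm (Fin m)) : Equiv.Perm (Fin (m + 2)) :=
  Equiv.swap (aF m) (bF m) * ext1 (ext1 π)

lemma ext2_aF (π : Equiv.Perm (Fin m)) : ext1 (ext1 π) (aF m) = aF m := by
  show ext1 (ext1 π) (Fin.last m).castSucc = _
  rw [ext1_castSucc, ext1_last]; rfl

lemma ext2_bF (π : Equiv.Perm (Fin m)) : ext1 (ext1 π) (bF m) = bF m := ext1_last _

lemma ext2_cs2 (π : Equiv.Perm (Fin m)) (y : Fin m) :
    ext1 (ext1 π) (cs2 y) = cs2 (π y) := by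
  show ext1 (ext1 π) y.castSucc.castSucc = _
  rw [ext1_castSucc, ext1_castSucc]; rfl

lemma wperm_aF (π : Equiv.Perm (Fin m)) : wperm π (aF m) = bF m := by
  rw [wperm, Equiv.Perm.mul_apply, ext2_aF, Equiv.swap_apply_left]

lemma wperm_bF (π : Equiv.Perm (Fin m)) : wperm π (bF m) = aF m := by
  rw [wperm, Equiv.Perm.mul_apply, ext2_bF, Equiv.swap_apply_right]

lemma wperm_cs2 (π : Equiv.Perm (Fin m)) (y : Fin m) :
    wperm π (cs2 y) = cs2 (π y) := by
  rw [wperm, Equiv.Perm.mul_apply, ext2_cs2,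
    Equiv.swap_apply_of_ne_of_ne (cs2_ne_aF _) (cs2_ne_bF _)]

lemma wperm_invol {π : Equiv.Perm (Fin m)} (h : π * π = 1) : wperm π * wperm π = 1 := by
  apply Equiv.ext
  intro i
  rw [Equiv.Perm.mul_apply, Equiv.Perm.one_apply]
  induction i using Fin.lastCases with
  | last => rw [show Fin.last (m+1) = bF m from rfl, wperm_bF, wperm_aF]
  | cast i =>
      induction i using Fin.lastCases with
      | last => rw [show (Fin.last m).castSucc = aF m from rfl, wperm_aF, wperm_bF]
      | cast y =>
          rw [show y.castSucc.castSucc = cs2 y from rfl, wperm_cs2, wperm_cs2, invol_apply h]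

/-- the canonical sign function used in the two-cycle case -/
def epsW (ε : Fin m → Bool) : Fin (m + 2) → Bool :=
  Fin.snoc (Fin.snoc ε true) true

lemma epsW_aF (ε : Fin m → Bool) : epsW ε (aF m) = true := by
  show epsW ε (Fin.last m).castSucc = true
  rw [epsW, Fin.snoc_castSucc, Fin.snoc_last]

lemma epsW_bF (ε : Fin m → Bool) : epsW ε (bF m) = true := Fin.snoc_last _ _

lemma epsW_cs2 (ε : Fin m → Bool) (y : Fin m) : epsW ε (cs2 y) = ε y := by
  show epsW ε y.castSucc.castSucc = ε y
  rw [epsW, Fin.snoc_castSucc, Fin.snoc_castSucc]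

lemma count_w (π : Equiv.Perm (Fin m)) (ε : Fin m → Bool) (t : Bool) :
    (Finset.univ.filter fun i => wperm π i = i ∧ epsW ε i = t).card
      = (Finset.univ.filter fun i => π i = i ∧ ε i = t).card := by
  rw [Finset.card_filter, Finset.card_filter, Fin.sum_univ_castSucc, Fin.sum_univ_castSucc]
  have h1 : wperm π (Fin.last (m+1)) ≠ Fin.last (m+1) := by
    rw [show Fin.last (m+1) = bF m from rfl, wperm_bF]
    exact aF_ne_bF
  have h2 : wperm π (Fin.last m).castSucc ≠ (Fin.last m).castSucc := by
    rw [show (Fin.last m).castSucc = aF m from rfl, wperm_aF]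
    exact fun h => aF_ne_bF h.symm
  rw [if_neg (fun hc => h2 hc.1), if_neg (fun hc => h1 hc.1), add_zero, add_zero]
  refine Finset.sum_congr rfl fun y _ => ?_
  congr 1
  rw [show y.castSucc.castSucc = cs2 y from rfl, wperm_cs2, epsW_cs2]
  rw [eq_iff_iff]
  constructor
  · rintro ⟨hy, he⟩; exact ⟨cs2_inj hy, he⟩
  · rintro ⟨hy, he⟩; exact ⟨by rw [hy], he⟩

lemma SIP_mk {n : ℕ} {d : ℤ} (π : Equiv.Perm (Fin n)) (ε : Fin n → Bool)
    (h1 : π * π = 1) (h2 : ∀ i, π i ≠ i → ε i = true)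
    (h3 : ((Finset.univ.filter fun i => π i = i ∧ ε i = true).card : ℤ) -
      ((Finset.univ.filter fun i => π i = i ∧ ε i = false).card : ℤ) = d) :
    SIP n d (π, ε) := ⟨h1, h2, h3⟩

lemma SIP_elim {n : ℕ} {d : ℤ} {π : Equiv.Perm (Fin n)} {ε : Fin n → Bool}
    (h : SIP n d (π, ε)) :
    π * π = 1 ∧ (∀ i, π i ≠ i → ε i = true) ∧
    ((Finset.univ.filter fun i => π i = i ∧ ε i = true).card : ℤ) -
      ((Finset.univ.filter fun i => π i = i ∧ ε i = false).card : ℤ) = d := h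

lemma wperm_move_eps (π : Equiv.Perm (Fin m)) (ε : Fin m → Bool)
    (h2 : ∀ y, π y ≠ y → ε y = true) :
    ∀ x, wperm π x ≠ x → epsW ε x = true := by
  refine Fin.lastCases ?_ ?_
  · intro _; exact epsW_bF ε
  · intro z
    refine Fin.lastCases ?_ ?_ z
    · intro _; exact epsW_aF ε
    · intro y hwx
      have hx : wperm π (cs2 y) ≠ cs2 y := hwx
      rw [wperm_cs2] at hx
      have hy : π y ≠ y := fun he => hx (by rw [he])
      calc epsW ε (y.castSucc.castSucc) = epsW ε (cs2 y) := rfl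
        _ = ε y := epsW_cs2 ε y
        _ = true := h2 y hy

lemma mem_ext1 {d' : ℤ} (v : Bool) (π : Equiv.Perm (Fin (m+1))) (ε : Fin (m+1) → Bool)
    (h : SIP (m+1) d' (π, ε)) :
    SIP (m+2) (d' + (if v then 1 else -1)) (ext1 π, Fin.snoc ε v) := by
  obtain ⟨h1, h2, h3⟩ := SIP_elim h
  apply SIP_mk
  · apply Equiv.ext
    intro i
    rw [Equiv.Perm.mul_apply, Equiv.Perm.one_apply]
    induction i using Fin.lastCases with
    | last => rw [ext1_last, ext1_last]
    | cast i => rw [ext1_castSucc, ext1_castSucc, invol_apply h1]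
  · intro i hi
    induction i using Fin.lastCases with
    | last => exact absurd (ext1_last π) hi
    | cast i =>
        rw [ext1_castSucc] at hi
        have : π i ≠ i := fun he => hi (by rw [he])
        rw [Fin.snoc_castSucc]
        exact h2 i this
  · rw [count_ext1, count_ext1]
    have hf : ∀ t : Bool, (Finset.univ.filter fun i => π i = i ∧ (Fin.snoc ε v : Fin (m+2) → Bool) i.castSucc = t)
        = (Finset.univ.filter fun i => π i = i ∧ ε i = t) := by
      intro t
      apply Finset.filter_congr
      intro i _
      rw [Fin.snoc_castSucc]
    rw [hf, hf, Fin.snoc_last]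
    cases v <;> simp <;> omega

lemma mem_w {d : ℤ} (j : Fin (m+1)) (π : Equiv.Perm (Fin m)) (ε : Fin m → Bool)
    (h : SIP m d (π, ε)) :
    SIP (m+2) d
      (Equiv.swap (aF m) j.castSucc * wperm π * (Equiv.swap (aF m) j.castSucc)⁻¹,
       fun i => epsW ε ((Equiv.swap (aF m) j.castSucc)⁻¹ i)) := by
  obtain ⟨h1, h2, h3⟩ := SIP_elim h
  set c := Equiv.swap (aF m) j.castSucc with hc
  have hw := wperm_invol h1
  refine ⟨?_, ?_, ?_⟩
  · show (c * wperm π * c⁻¹) * (c * wperm π * c⁻¹) = 1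
    have : (c * wperm π * c⁻¹) * (c * wperm π * c⁻¹) = c * (wperm π * wperm π) * c⁻¹ := by
      group
    rw [this, hw]
    group
  · intro i hi
    have hwx : wperm π (c⁻¹ i) ≠ c⁻¹ i := by
      intro he
      exact hi (by rw [Equiv.Perm.mul_apply, Equiv.Perm.mul_apply, he, ← Equiv.Perm.mul_apply, mul_inv_cancel, Equiv.Perm.one_apply])
    exact wperm_move_eps π ε h2 _ hwx
  · show ((Finset.univ.filter fun i => (c * wperm π * c⁻¹) i = i ∧ epsW ε (c⁻¹ i) = true).card : ℤ)
      - ((Finset.univ.filter fun i => (c * wperm π * c⁻¹) i = i ∧ epsW ε (c⁻¹ i) = false).card : ℤ) = d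
    rw [count_conj, count_conj, count_w, count_w]
    exact h3

lemma SIP_congr {n : ℕ} {d d' : ℤ} {x} (h : SIP n d x) (e : d = d') : SIP n d' x := e ▸ h

noncomputable def ifun (m : ℕ) (d : ℤ) :
    SI (m+1) (d-1) ⊕ SI (m+1) (d+1) ⊕ (Fin (m+1) × SI m d) → SI (m+2) d
  | .inl ⟨(π, ε), h⟩ => ⟨(ext1 π, Fin.snoc ε true),
      SIP_congr (mem_ext1 true π ε h) (by norm_num)⟩
  | .inr (.inl ⟨(π, ε), h⟩) => ⟨(ext1 π, Fin.snoc ε false),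
      SIP_congr (mem_ext1 false π ε h) (by norm_num)⟩
  | .inr (.inr (j, ⟨(π, ε), h⟩)) =>
      ⟨(Equiv.swap (aF m) j.castSucc * wperm π * (Equiv.swap (aF m) j.castSucc)⁻¹,
        fun i => epsW ε ((Equiv.swap (aF m) j.castSucc)⁻¹ i)), mem_w j π ε h⟩

lemma bF_ne_castSucc (j : Fin (m+1)) : bF m ≠ j.castSucc := (Fin.castSucc_lt_last j).ne'

lemma swap_bF (j : Fin (m+1)) : Equiv.swap (aF m) j.castSucc (bF m) = bF m :=
  Equiv.swap_apply_of_ne_of_ne (Ne.symm aF_ne_bF) (bF_ne_castSucc j)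

lemma case3_at_b (j : Fin (m+1)) (π : Equiv.Perm (Fin m)) :
    (Equiv.swap (aF m) j.castSucc * wperm π * (Equiv.swap (aF m) j.castSucc)⁻¹) (bF m)
      = j.castSucc := by
  rw [Equiv.Perm.mul_apply, Equiv.Perm.mul_apply, Equiv.swap_inv, swap_bF, wperm_bF,
    Equiv.swap_apply_left]

lemma case3_eps_b (j : Fin (m+1)) (ε : Fin m → Bool) :
    epsW ε ((Equiv.swap (aF m) j.castSucc)⁻¹ (bF m)) = true := by
  rw [Equiv.swap_inv, swap_bF]
  exact epsW_bF ε

lemma snoc_eq_iff {v : Bool} {ε₁ ε₂ : Fin (m+1) → Bool}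
    (h : (Fin.snoc ε₁ v : Fin (m+2) → Bool) = Fin.snoc ε₂ v) : ε₁ = ε₂ := by
  funext i
  have := congrFun h i.castSucc
  rwa [Fin.snoc_castSucc, Fin.snoc_castSucc] at this

lemma ifun_inj (m : ℕ) (d : ℤ) : Function.Injective (ifun m d) := by
  rintro (⟨⟨π₁, ε₁⟩, h₁⟩ | ⟨⟨π₁, ε₁⟩, h₁⟩ | ⟨j₁, ⟨⟨π₁, ε₁⟩, h₁⟩⟩)
    (⟨⟨π₂, ε₂⟩, h₂⟩ | ⟨⟨π₂, ε₂⟩, h₂⟩ | ⟨j₂, ⟨⟨π₂, ε₂⟩, h₂⟩⟩) h <;>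
    simp only [ifun, Subtype.mk.injEq, Prod.mk.injEq] at h
  · simp only [Sum.inl.injEq, Subtype.mk.injEq, Prod.mk.injEq]
    exact ⟨ext1_inj h.1, snoc_eq_iff h.2⟩
  · exfalso
    have := congrFun h.2 (bF m)
    rw [show bF m = Fin.last (m+1) from rfl, Fin.snoc_last, Fin.snoc_last] at this
    exact Bool.noConfusion this
  · exfalso
    have := DFunLike.congr_fun h.1 (bF m)
    rw [case3_at_b, show bF m = Fin.last (m+1) from rfl, ext1_last] at this
    exact bF_ne_castSucc j₂ this
  · exfalso
    have := congrFun h.2 (bF m)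
    rw [show bF m = Fin.last (m+1) from rfl, Fin.snoc_last, Fin.snoc_last] at this
    exact Bool.noConfusion this
  · simp only [Sum.inr.injEq, Sum.inl.injEq, Subtype.mk.injEq, Prod.mk.injEq]
    exact ⟨ext1_inj h.1, snoc_eq_iff h.2⟩
  · exfalso
    have := DFunLike.congr_fun h.1 (bF m)
    rw [case3_at_b, show bF m = Fin.last (m+1) from rfl, ext1_last] at this
    exact bF_ne_castSucc j₂ this
  · exfalso
    have := DFunLike.congr_fun h.1 (bF m)
    rw [case3_at_b, show bF m = Fin.last (m+1) from rfl, ext1_last] at this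
    exact bF_ne_castSucc j₁ this.symm
  · exfalso
    have := DFunLike.congr_fun h.1 (bF m)
    rw [case3_at_b, show bF m = Fin.last (m+1) from rfl, ext1_last] at this
    exact bF_ne_castSucc j₁ this.symm
  · have hj : j₁ = j₂ := by
      have := DFunLike.congr_fun h.1 (bF m)
      rw [case3_at_b, case3_at_b] at this
      exact Fin.castSucc_injective _ this
    subst hj
    have hw : wperm π₁ = wperm π₂ :=
      mul_left_cancel (mul_right_cancel h.1)
    have hπ : π₁ = π₂ := ext1_inj (ext1_inj (mul_left_cancel hw))
    have hε : ε₁ = ε₂ := by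
      funext y
      have := congrFun h.2 (Equiv.swap (aF m) j₁.castSucc (cs2 y))
      rw [Equiv.swap_inv, Equiv.swap_apply_self, epsW_cs2, epsW_cs2] at this
      exact this
    simp only [Sum.inr.injEq, Prod.mk.injEq, Subtype.mk.injEq]
    exact ⟨trivial, hπ, hε⟩

lemma swap_w_comm (w : Equiv.Perm (Fin (m+2))) (hwb : w (bF m) = aF m)
    (hwa : w (aF m) = bF m) (hww : w * w = 1) :
    Equiv.swap (aF m) (bF m) * w = w * Equiv.swap (aF m) (bF m) := by
  apply Equiv.ext
  intro x
  rw [Equiv.Perm.mul_apply, Equiv.Perm.mul_apply]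
  by_cases hx1 : x = aF m
  · subst hx1
    rw [hwa, Equiv.swap_apply_left, hwb, Equiv.swap_apply_right]
  by_cases hx2 : x = bF m
  · subst hx2
    rw [hwb, Equiv.swap_apply_right, hwa, Equiv.swap_apply_left]
  · have hw1 : w x ≠ aF m := fun he => hx2 (by rw [← invol_apply hww x, he, hwa])
    have hw2 : w x ≠ bF m := fun he => hx1 (by rw [← invol_apply hww x, he, hwb])
    rw [Equiv.swap_apply_of_ne_of_ne hw1 hw2, Equiv.swap_apply_of_ne_of_ne hx1 hx2]

lemma ifun_surj (m : ℕ) (d : ℤ) : Function.Surjective (ifun m d) := by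
  rintro ⟨⟨σ, ε'⟩, h⟩
  obtain ⟨h1, h2, h3⟩ := SIP_elim h
  by_cases hb : σ (Fin.last (m+1)) = Fin.last (m+1)
  · -- last point fixed
    have hσ : ext1 (restr1 σ hb) = σ := ext1_restr1 σ hb
    set π' := restr1 σ hb with hπ'
    have h1' : π' * π' = 1 := by
      apply Equiv.ext; intro i
      rw [Equiv.Perm.mul_apply, Equiv.Perm.one_apply]
      apply Fin.castSucc_injective
      rw [restr1_apply, hπ', restr1_apply, invol_apply h1]
    have h2' : ∀ i, π' i ≠ i → (fun k : Fin (m+1) => ε' k.castSucc) i = true := by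
      intro i hi
      apply h2
      intro he
      exact hi (Fin.castSucc_injective _ (by rw [hπ', restr1_apply, he]))
    rw [← hσ, count_ext1 π' ε' true, count_ext1 π' ε' false] at h3
    have hsnoc : (Fin.snoc (fun k : Fin (m+1) => ε' k.castSucc) (ε' (Fin.last (m+1)))
        : Fin (m+2) → Bool) = ε' := by
      funext x
      induction x using Fin.lastCases with
      | last => rw [Fin.snoc_last]
      | cast i => rw [Fin.snoc_castSucc]
    cases hεb : ε' (Fin.last (m+1)) with
    | true =>
        rw [hεb] at h3
        norm_num at h3
        refine ⟨.inl ⟨(π', fun k : Fin (m+1) => ε' k.castSucc),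
          SIP_mk _ _ h1' h2' ?_⟩, ?_⟩
        · show ((Finset.univ.filter fun i => π' i = i ∧ ε' i.castSucc = true).card : ℤ)
            - ((Finset.univ.filter fun i => π' i = i ∧ ε' i.castSucc = false).card : ℤ) = d - 1
          omega
        · apply Subtype.ext
          show (ext1 π', (Fin.snoc (fun k : Fin (m+1) => ε' k.castSucc) true : Fin (m+2) → Bool))
            = (σ, ε')
          rw [hσ, ← hεb, hsnoc]
    | false =>
        rw [hεb] at h3
        norm_num at h3
        refine ⟨.inr (.inl ⟨(π', fun k : Fin (m+1) => ε' k.castSucc),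
          SIP_mk _ _ h1' h2' ?_⟩), ?_⟩
        · show ((Finset.univ.filter fun i => π' i = i ∧ ε' i.castSucc = true).card : ℤ)
            - ((Finset.univ.filter fun i => π' i = i ∧ ε' i.castSucc = false).card : ℤ) = d + 1
          omega
        · apply Subtype.ext
          show (ext1 π', (Fin.snoc (fun k : Fin (m+1) => ε' k.castSucc) false : Fin (m+2) → Bool))
            = (σ, ε')
          rw [hσ, ← hεb, hsnoc]
  · -- last point moved
    have hbb : σ (bF m) ≠ bF m := hb
    set j := (σ (bF m)).castPred hb with hjdef
    have hj : j.castSucc = σ (bF m) := Fin.castSucc_castPred _ _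
    set c := Equiv.swap (aF m) j.castSucc with hc
    have hcinv : c⁻¹ = c := Equiv.swap_inv _ _
    have hcb : c (bF m) = bF m := swap_bF j
    have hca : c (aF m) = j.castSucc := Equiv.swap_apply_left _ _
    have hσσb : σ (σ (bF m)) = bF m := invol_apply h1 _
    set w := c⁻¹ * σ * c with hwdef
    have hwb : w (bF m) = aF m := by
      rw [hwdef, Equiv.Perm.mul_apply, Equiv.Perm.mul_apply, hcb, ← hj, hcinv]
      exact Equiv.swap_apply_right _ _
    have hwa : w (aF m) = bF m := by
      rw [hwdef, Equiv.Perm.mul_apply, Equiv.Perm.mul_apply, hca, hj, hσσb, hcinv, hcb]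
    have hww : w * w = 1 := by
      rw [hwdef, show (c⁻¹ * σ * c) * (c⁻¹ * σ * c) = c⁻¹ * (σ * σ) * c from by group, h1]
      group
    set u := Equiv.swap (aF m) (bF m) * w with hu
    have hcomm := swap_w_comm w hwb hwa hww
    have hub : u (Fin.last (m+1)) = Fin.last (m+1) := by
      show u (bF m) = bF m
      rw [hu, Equiv.Perm.mul_apply, hwb, Equiv.swap_apply_left]
    have hua : u (aF m) = aF m := by
      rw [hu, Equiv.Perm.mul_apply, hwa, Equiv.swap_apply_right]
    have huu : u * u = 1 := by
      rw [hu]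
      calc Equiv.swap (aF m) (bF m) * w * (Equiv.swap (aF m) (bF m) * w)
          = Equiv.swap (aF m) (bF m) * (w * Equiv.swap (aF m) (bF m)) * w := by group
        _ = Equiv.swap (aF m) (bF m) * (Equiv.swap (aF m) (bF m) * w) * w := by rw [hcomm]
        _ = (Equiv.swap (aF m) (bF m) * Equiv.swap (aF m) (bF m)) * (w * w) := by group
        _ = 1 := by rw [Equiv.swap_mul_self, hww, one_mul]
    set π1 := restr1 u hub with hπ1def
    have hπ1last : π1 (Fin.last m) = Fin.last m := by
      apply Fin.castSucc_injective
      rw [hπ1def, restr1_apply]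
      exact hua
    set π := restr1 π1 hπ1last with hπdef
    have hext2 : ext1 (ext1 π) = u := by
      rw [hπdef, ext1_restr1, hπ1def, ext1_restr1]
    have hwperm : wperm π = w := by
      rw [wperm, hext2, hu, ← mul_assoc, Equiv.swap_mul_self, one_mul]
    have hσeq : c * wperm π * c⁻¹ = σ := by
      rw [hwperm, hwdef]
      group
    have hepsall : ∀ x, epsW (fun y : Fin m => ε' (c (cs2 y))) x = ε' (c x) := by
      refine Fin.lastCases ?_ ?_
      · rw [show Fin.last (m+1) = bF m from rfl, hcb, epsW_bF, h2 _ hbb]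
      · intro z
        refine Fin.lastCases ?_ ?_ z
        · show epsW _ (aF m) = ε' (c (aF m))
          have he2 : ε' (σ (bF m)) = true := h2 _ (by rw [hσσb]; exact Ne.symm hbb)
          rw [epsW_aF, hca, hj, he2]
        · intro y
          show epsW _ (cs2 y) = ε' (c (cs2 y))
          rw [epsW_cs2]
    have hεpt : ∀ i, epsW (fun y : Fin m => ε' (c (cs2 y))) (c⁻¹ i) = ε' i := by
      intro i
      rw [hepsall (c⁻¹ i), ← Equiv.Perm.mul_apply, mul_inv_cancel, Equiv.Perm.one_apply]
    have hπcs2 : ∀ y, cs2 (π y) = u (cs2 y) := by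
      intro y
      rw [← hext2]
      exact (ext2_cs2 π y).symm
    have h1π : π * π = 1 := by
      apply Equiv.ext; intro y
      rw [Equiv.Perm.mul_apply, Equiv.Perm.one_apply]
      apply cs2_inj
      calc cs2 (π (π y)) = u (cs2 (π y)) := hπcs2 _
        _ = u (u (cs2 y)) := by rw [hπcs2]
        _ = cs2 y := invol_apply huu _
    have h2π : ∀ y, π y ≠ y → (fun z : Fin m => ε' (c (cs2 z))) y = true := by
      intro y hy
      apply h2
      intro he
      apply hy
      have hwfix : w (cs2 y) = cs2 y := by
        rw [hwdef, Equiv.Perm.mul_apply, Equiv.Perm.mul_apply, he, ← Equiv.Perm.mul_apply, inv_mul_cancel, Equiv.Perm.one_apply]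
      have hufix : u (cs2 y) = cs2 y := by
        rw [hu, Equiv.Perm.mul_apply, hwfix,
          Equiv.swap_apply_of_ne_of_ne (cs2_ne_aF y) (cs2_ne_bF y)]
      apply cs2_inj
      rw [hπcs2, hufix]
    have h3π :
        ((Finset.univ.filter fun y => π y = y ∧ ε' (c (cs2 y)) = true).card : ℤ)
          - ((Finset.univ.filter fun y => π y = y ∧ ε' (c (cs2 y)) = false).card : ℤ) = d := by
      rw [← count_w π (fun y : Fin m => ε' (c (cs2 y))) true,
        ← count_w π (fun y : Fin m => ε' (c (cs2 y))) false,
        ← count_conj c (wperm π) (epsW (fun y : Fin m => ε' (c (cs2 y)))) true,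
        ← count_conj c (wperm π) (epsW (fun y : Fin m => ε' (c (cs2 y)))) false]
      simp only [hεpt, hσeq]
      exact h3
    refine ⟨.inr (.inr (j, ⟨(π, fun y : Fin m => ε' (c (cs2 y))),
      SIP_mk _ _ h1π h2π h3π⟩)), ?_⟩
    apply Subtype.ext
    show (c * wperm π * c⁻¹, fun i => epsW (fun y : Fin m => ε' (c (cs2 y))) (c⁻¹ i)) = (σ, ε')
    rw [hσeq]
    congr 1
    funext i
    exact hεpt i

lemma card_si_rec (m : ℕ) (d : ℤ) :
    Nat.card (SI (m+2) d)
      = Nat.card (SI (m+1) (d-1)) + Nat.card (SI (m+1) (d+1)) + (m+1) * Nat.card (SI m d) := by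
  have := Nat.card_eq_of_bijective _ ⟨ifun_inj m d, ifun_surj m d⟩
  rw [← this, Nat.card_sum, Nat.card_sum, Nat.card_prod,
    Nat.card_eq_fintype_card (α := Fin (m+1)), Fintype.card_fin, add_assoc]

lemma si_diag_plus_unique {n : ℕ} {π : Equiv.Perm (Fin n)} {ε : Fin n → Bool}
    (h : SIP n (n : ℤ) (π, ε)) : π = 1 ∧ ε = fun _ => true := by
  obtain ⟨h1, h2, h3⟩ := SIP_elim h
  have hA : (Finset.univ.filter fun i => π i = i ∧ ε i = true).card ≤ n := by
    refine le_trans (Finset.card_filter_le _ _) ?_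
    simp
  have hcard : (Finset.univ.filter fun i => π i = i ∧ ε i = true).card = n := by omega
  have hAu : (Finset.univ.filter fun i => π i = i ∧ ε i = true) = Finset.univ :=
    Finset.eq_univ_of_card _ (by simpa using hcard)
  have hall : ∀ i, π i = i ∧ ε i = true := by
    intro i
    have : i ∈ (Finset.univ.filter fun i => π i = i ∧ ε i = true) := by
      rw [hAu]; exact Finset.mem_univ i
    exact (Finset.mem_filter.1 this).2
  constructor
  · apply Equiv.ext; intro i
    rw [(hall i).1, Equiv.Perm.one_apply]
  · funext i
    exact (hall i).2

lemma si_diag_minus_unique {n : ℕ} {π : Equiv.Perm (Fin n)} {ε : Fin n → Bool}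
    (h : SIP n (-(n : ℤ)) (π, ε)) : π = 1 ∧ ε = fun _ => false := by
  obtain ⟨h1, h2, h3⟩ := SIP_elim h
  have hB : (Finset.univ.filter fun i => π i = i ∧ ε i = false).card ≤ n := by
    refine le_trans (Finset.card_filter_le _ _) ?_
    simp
  have hcard : (Finset.univ.filter fun i => π i = i ∧ ε i = false).card = n := by omega
  have hBu : (Finset.univ.filter fun i => π i = i ∧ ε i = false) = Finset.univ :=
    Finset.eq_univ_of_card _ (by simpa using hcard)
  have hall : ∀ i, π i = i ∧ ε i = false := by
    intro i
    have : i ∈ (Finset.univ.filter fun i => π i = i ∧ ε i = false) := by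
      rw [hBu]; exact Finset.mem_univ i
    exact (Finset.mem_filter.1 this).2
  constructor
  · apply Equiv.ext; intro i
    rw [(hall i).1, Equiv.Perm.one_apply]
  · funext i
    exact (hall i).2

lemma card_si_diag_plus (n : ℕ) : Nat.card (SI n (n : ℤ)) = 1 := by
  haveI : Nonempty (SI n (n : ℤ)) := by
    refine ⟨⟨(1, fun _ => true), SIP_mk 1 (fun _ => true) (by group) (fun i hi => rfl) ?_⟩⟩
    simp
  haveI : Subsingleton (SI n (n : ℤ)) := by
    constructor
    rintro ⟨⟨π₁, ε₁⟩, hh₁⟩ ⟨⟨π₂, ε₂⟩, hh₂⟩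
    obtain ⟨e1, e2⟩ := si_diag_plus_unique hh₁
    obtain ⟨e3, e4⟩ := si_diag_plus_unique hh₂
    subst e1; subst e2; subst e3; subst e4; rfl
  exact Nat.card_unique

lemma card_si_diag_minus (n : ℕ) : Nat.card (SI n (-(n : ℤ))) = 1 := by
  haveI : Nonempty (SI n (-(n : ℤ))) := by
    refine ⟨⟨(1, fun _ => false), SIP_mk 1 (fun _ => false) (by group)
      (fun i hi => absurd (Equiv.Perm.one_apply i) hi) ?_⟩⟩
    simp
  haveI : Subsingleton (SI n (-(n : ℤ))) := by
    constructor
    rintro ⟨⟨π₁, ε₁⟩, hh₁⟩ ⟨⟨π₂, ε₂⟩, hh₂⟩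
    obtain ⟨e1, e2⟩ := si_diag_minus_unique hh₁
    obtain ⟨e3, e4⟩ := si_diag_minus_unique hh₂
    subst e1; subst e2; subst e3; subst e4; rfl
  exact Nat.card_unique

lemma si_congr {n n' : ℕ} {d d' : ℤ} (hn : n = n') (hd : d = d') :
    Nat.card (SI n d) = Nat.card (SI n' d') := by subst hn; subst hd; rfl

end Inv

lemma alpha_eq (p q : ℕ) : alphaCount p q = Nat.card (SI (p+q) ((p:ℤ) - (q:ℤ))) := rfl

lemma main_count : ∀ n p q : ℕ, p + q = n →
    Nat.card {l : List (DStep × ℕ) // IsWeightedDelannoy p q l} = alphaCount p q := by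
  intro n
  induction n using Nat.strong_induction_on with
  | _ n ih =>
    intro p q hn
    cases q with
    | zero =>
        rw [card_wd_p0, alpha_eq,
          si_congr (show p + 0 = p from by omega) (show (p:ℤ) - ((0:ℕ):ℤ) = (p:ℤ) from by
            push_cast; ring)]
        exact (card_si_diag_plus p).symm
    | succ q =>
      cases p with
      | zero =>
          rw [card_wd_0q, alpha_eq,
            si_congr (show 0 + (q+1) = q+1 from by omega)
              (show ((0:ℕ):ℤ) - ((q+1:ℕ):ℤ) = -((q+1:ℕ):ℤ) from by push_cast; ring)]
          exact (card_si_diag_minus (q+1)).symm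
      | succ p =>
          rw [card_wd_rec,
            ih (p + (q+1)) (by omega) p (q+1) rfl,
            ih ((p+1) + q) (by omega) (p+1) q rfl,
            ih (p + q) (by omega) p q rfl,
            alpha_eq p (q+1), alpha_eq (p+1) q, alpha_eq p q, alpha_eq (p+1) (q+1),
            si_congr (show (p+1) + (q+1) = (p+q)+2 from by omega)
              (show ((p+1:ℕ):ℤ) - ((q+1:ℕ):ℤ) = (p:ℤ) - (q:ℤ) from by push_cast; ring),
            card_si_rec (p+q) ((p:ℤ) - (q:ℤ)),
            si_congr (show p + (q+1) = (p+q)+1 from by omega)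
              (show (p:ℤ) - ((q+1:ℕ):ℤ) = ((p:ℤ) - (q:ℤ)) - 1 from by push_cast; ring),
            si_congr (show (p+1) + q = (p+q)+1 from by omega)
              (show ((p+1:ℕ):ℤ) - (q:ℤ) = ((p:ℤ) - (q:ℤ)) + 1 from by push_cast; ring)]

theorem stmt9 (p q : ℕ) :
    Nonempty ({l : List (DStep × ℕ) // IsWeightedDelannoy p q l} ≃
        {x : Equiv.Perm (Fin (p + q)) × (Fin (p + q) → Bool) // IsSignedInv p q x}) ∧
      Nat.card {l : List (DStep × ℕ) // IsWeightedDelannoy p q l} = alphaCount p q := by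
  have hcard : Nat.card {l : List (DStep × ℕ) // IsWeightedDelannoy p q l} = alphaCount p q :=
    main_count (p + q) p q rfl
  refine ⟨?_, hcard⟩
  haveI := wdFinite p q
  exact Finite.card_eq.1 hcard
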